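/- arXiv:2103.04543 — 4 statements merged into one kernel-verified Lean document; each statement's English description precedes it below -/
import Mathlib

section
/- Median/representative set lemma: Let S and T be finite disjoint sets with a linear order ≺ on S ∪ T placing all of S before all of T, and let R ⊆ S × T satisfy the subinterval property: if (s, t) ∈ R and s ⪯ s' ≺ t' ⪯ t then (s', t') ∈ R. Let y : R → ℝ_{≥0} with total mass γ = ∑_{(s,t)∈R} y(s,t) > 0. Define s* as the ≺-maximum s ∈ S such that ∑_{s' ⪰ s} ∑_{t : (s',t)∈R} y(s',t) ≥ γ/2, and t* as the ≺-minimum t ∈ T such that ∑_{t' ⪯ t} ∑_{s: (s,t')∈R} y(s,t') ≥ γ/2. Then S̃ × T̃ ⊆ R, where S̃ = {s ∈ S : s ⪰ s*} and T̃ = {t ∈ T : t ⪯ t*}. -/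
/-- Median/representative set lemma: let `S, T` be finite disjoint sets with
all of `S` before all of `T` in a linear order, `R ⊆ S × T` with the
subinterval property, and `y : R → ℝ≥0` of total mass `γ > 0`. If `sstar` is
the maximum element of `S` whose suffix mass is at least `γ/2` and `tstar` is
the minimum element of `T` whose prefix mass is at least `γ/2`, then
`S̃ × T̃ ⊆ R` for `S̃ = {s ∈ S : s ⪰ sstar}` and `T̃ = {t ∈ T : t ⪯ tstar}`. -/
theorem stmt8 {V : Type*} [LinearOrder V] (S T : Finset V)
    (hST : ∀ s ∈ S, ∀ t ∈ T, s < t)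
    (R : Finset (V × V)) (hR : ∀ p ∈ R, p.1 ∈ S ∧ p.2 ∈ T)
    (hsub : ∀ p ∈ R, ∀ s' ∈ S, ∀ t' ∈ T, p.1 ≤ s' → t' ≤ p.2 → (s', t') ∈ R)
    (y : V × V → ℝ) (hy : ∀ p ∈ R, 0 ≤ y p)
    (γ : ℝ) (hγ : γ = ∑ p ∈ R, y p) (hpos : 0 < γ)
    (sstar tstar : V) (hs : sstar ∈ S) (ht : tstar ∈ T)
    (hsmass : γ / 2 ≤ ∑ p ∈ R.filter (fun p => sstar ≤ p.1), y p)
    (hsmax : ∀ s ∈ S, sstar < s →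
      (∑ p ∈ R.filter (fun p => s ≤ p.1), y p) < γ / 2)
    (htmass : γ / 2 ≤ ∑ p ∈ R.filter (fun p => p.2 ≤ tstar), y p)
    (htmin : ∀ t ∈ T, t < tstar →
      (∑ p ∈ R.filter (fun p => p.2 ≤ t), y p) < γ / 2) :
    ∀ s ∈ S, sstar ≤ s → ∀ t ∈ T, t ≤ tstar → (s, t) ∈ R := by
  intro s hsS hss t htT htt
  -- mass of pairs with p.1 > s is < γ/2
  have h1 : (∑ p ∈ R.filter (fun p => ¬ p.1 ≤ s), y p) < γ / 2 := by
    by_cases hne : (S.filter (fun x => s < x)).Nonempty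
    · set s'' := (S.filter (fun x => s < x)).min' hne with hs''
      have hmem := (S.filter (fun x => s < x)).min'_mem hne
      rw [Finset.mem_filter] at hmem
      have hle : (∑ p ∈ R.filter (fun p => ¬ p.1 ≤ s), y p)
          ≤ ∑ p ∈ R.filter (fun p => s'' ≤ p.1), y p := by
        apply Finset.sum_le_sum_of_subset_of_nonneg
        · intro p hp
          rw [Finset.mem_filter] at hp ⊢
          refine ⟨hp.1, Finset.min'_le _ _ ?_⟩
          rw [Finset.mem_filter]
          exact ⟨(hR p hp.1).1, lt_of_not_ge hp.2⟩
        · intro p hp _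
          exact hy p (Finset.mem_filter.mp hp).1
      exact lt_of_le_of_lt hle (hsmax s'' hmem.1 (lt_of_le_of_lt hss hmem.2))
    · have : R.filter (fun p => ¬ p.1 ≤ s) = ∅ := by
        rw [Finset.filter_eq_empty_iff]
        intro p hp hlt
        exact hne ⟨p.1, Finset.mem_filter.mpr ⟨(hR p hp).1, lt_of_not_ge hlt⟩⟩
      rw [this, Finset.sum_empty]; linarith
  have h2 : (∑ p ∈ R.filter (fun p => ¬ t ≤ p.2), y p) < γ / 2 := by
    by_cases hne : (T.filter (fun x => x < t)).Nonempty
    · set t'' := (T.filter (fun x => x < t)).max' hne with ht''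
      have hmem := (T.filter (fun x => x < t)).max'_mem hne
      rw [Finset.mem_filter] at hmem
      have hle : (∑ p ∈ R.filter (fun p => ¬ t ≤ p.2), y p)
          ≤ ∑ p ∈ R.filter (fun p => p.2 ≤ t''), y p := by
        apply Finset.sum_le_sum_of_subset_of_nonneg
        · intro p hp
          rw [Finset.mem_filter] at hp ⊢
          refine ⟨hp.1, Finset.le_max' _ _ ?_⟩
          rw [Finset.mem_filter]
          exact ⟨(hR p hp.1).2, lt_of_not_ge hp.2⟩
        · intro p hp _
          exact hy p (Finset.mem_filter.mp hp).1
      exact lt_of_le_of_lt hle (htmin t'' hmem.1 (lt_of_lt_of_le hmem.2 htt))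
    · have : R.filter (fun p => ¬ t ≤ p.2) = ∅ := by
        rw [Finset.filter_eq_empty_iff]
        intro p hp hlt
        exact hne ⟨p.2, Finset.mem_filter.mpr ⟨(hR p hp).2, lt_of_not_ge hlt⟩⟩
      rw [this, Finset.sum_empty]; linarith
  have hA : γ / 2 < ∑ p ∈ R.filter (fun p => p.1 ≤ s), y p := by
    have := Finset.sum_filter_add_sum_filter_not R (fun p => p.1 ≤ s) y
    rw [← hγ] at this; linarith
  have hB : γ / 2 < ∑ p ∈ R.filter (fun p => t ≤ p.2), y p := by
    have := Finset.sum_filter_add_sum_filter_not R (fun p => t ≤ p.2) y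
    rw [← hγ] at this; linarith
  -- intersection has positive mass
  have hinter : 0 < ∑ p ∈ R.filter (fun p => p.1 ≤ s ∧ t ≤ p.2), y p := by
    have hsplit := Finset.sum_filter_add_sum_filter_not
      (R.filter (fun p => p.1 ≤ s)) (fun p => t ≤ p.2) y
    have hle : (∑ p ∈ (R.filter (fun p => p.1 ≤ s)).filter (fun p => ¬ t ≤ p.2), y p)
        ≤ ∑ p ∈ R.filter (fun p => ¬ t ≤ p.2), y p := by
      apply Finset.sum_le_sum_of_subset_of_nonneg
      · intro p hp
        rw [Finset.mem_filter] at hp ⊢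
        exact ⟨(Finset.mem_filter.mp hp.1).1, hp.2⟩
      · intro p hp _
        exact hy p (Finset.mem_filter.mp hp).1
    have heq : (R.filter (fun p => p.1 ≤ s)).filter (fun p => t ≤ p.2)
        = R.filter (fun p => p.1 ≤ s ∧ t ≤ p.2) := by
      rw [Finset.filter_filter]
    rw [heq] at hsplit
    linarith
  obtain ⟨p, hp⟩ := Finset.nonempty_of_sum_ne_zero (ne_of_gt hinter)
  rw [Finset.mem_filter] at hp
  exact hsub p hp.1 s hsS t htT hp.2.1 hp.2.2
end

section
/- Primal-dual rate inequality for online covering: Suppose during the processing of covering constraint i (with coefficients a_{ij} ≥ 0), each primal variable is maintained as x_j = (α/(2n c_j))·exp((ln(2n)/c_j)·∑_k a_{kj} y_k) while the dual variable y_i increases, and the update stops while ∑_j a_{ij} x_j ≤ 2. Then at all times during the update, dX/dy_i = ∑_j c_j · dx_j/dy_i = ln(2n) · ∑_j a_{ij} x_j ≤ 2 ln(2n) = 2 ln(2n) · dY/dy_i, where X = ∑_j c_j x_j and Y = ∑_k y_k. -/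
/-- Primal-dual rate inequality for online covering: if each primal variable
is maintained as `x j y = (α/(2n c j)) · exp((ln(2n)/c j)·(S j + a j · y))`
as the dual variable `y` increases (where `S j` collects the contributions of
the previously fixed dual variables), and the update stops while
`∑_j a j · x j y₀ ≤ 2`, then the covering objective `X = ∑_j c j · x j`
satisfies `dX/dy = ln(2n) · ∑_j a j · x j y₀ ≤ 2 ln(2n)` at `y₀`. -/
theorem stmt13 {ι : Type*} (J : Finset ι) (n : ℕ) (hn : 1 ≤ n)
    (c : ι → ℝ) (hc : ∀ j ∈ J, 0 < c j)
    (α : ℝ) (hα : 0 < α)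
    (a S : ι → ℝ) (ha : ∀ j ∈ J, 0 ≤ a j)
    (x : ι → ℝ → ℝ)
    (hx : ∀ j ∈ J, ∀ y : ℝ, x j y =
      α / (2 * n * c j) * Real.exp (Real.log (2 * n) / c j * (S j + a j * y)))
    (y₀ : ℝ) (hstop : (∑ j ∈ J, a j * x j y₀) ≤ 2) :
    HasDerivAt (fun y => ∑ j ∈ J, c j * x j y)
      (Real.log (2 * n) * ∑ j ∈ J, a j * x j y₀) y₀ ∧
    Real.log (2 * n) * (∑ j ∈ J, a j * x j y₀) ≤ 2 * Real.log (2 * n) := by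
  have hlog : 0 ≤ Real.log (2 * n) := by
    apply Real.log_nonneg
    have : (1:ℝ) ≤ n := by exact_mod_cast hn
    nlinarith
  constructor
  · rw [Finset.mul_sum]
    apply HasDerivAt.fun_sum
    intro j hj
    have hcj := hc j hj
    have hxj := hx j hj
    have heq : (fun y => c j * x j y) =
        fun y => c j * (α / (2 * n * c j) *
          Real.exp (Real.log (2 * n) / c j * (S j + a j * y))) :=
      funext fun y => by rw [hxj y]
    rw [heq]
    have hd : HasDerivAt (fun y => Real.log (2 * n) / c j * (S j + a j * y))
        (Real.log (2 * n) / c j * a j) y₀ := by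
      have h1 : HasDerivAt (fun y : ℝ => S j + a j * y) (a j) y₀ := by
        simpa using ((hasDerivAt_id y₀).const_mul (a j)).const_add (S j)
      simpa using h1.const_mul (Real.log (2 * n) / c j)
    have h2 := ((hd.exp).const_mul (α / (2 * n * c j))).const_mul (c j)
    refine h2.congr_deriv ?_
    rw [hxj y₀]
    field_simp
  · calc Real.log (2 * n) * (∑ j ∈ J, a j * x j y₀)
        ≤ Real.log (2 * n) * 2 := by
          exact mul_le_mul_of_nonneg_left hstop hlog
      _ = 2 * Real.log (2 * n) := mul_comm _ _
end

section
/- Packing rate inequality: Suppose during the update of dual variable y_i, each x_j satisfies x_j ≥ (1/(n a_j^max))·(exp((B/(3c_j))·∑_k a_{kj} y_k) − 1), that ∑_j a_{ij} x_j ≤ 2 throughout the update, and that a_{ij} ≤ a_j^max for all j. Then dX/dy_i = ∑_j c_j dx_j/dy_i ≤ (B/3)·(∑_j a_{ij} x_j + ∑_j a_{ij}/(n a_j^max)) ≤ (B/3)·(2 + 1) = B, where X = ∑_j c_j x_j. Hence X(i) ≤ B · Y(i) for Y(i) = ∑_k y_k. -/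
/-- Packing rate inequality: if each primal variable is maintained as
`x j y = (1/(n·amax j)) · (exp((B/(3 c j))·(S j + a j · y)) − 1)` while the
dual variable `y` increases, with `∑_j a j · x j y₀ ≤ 2` throughout the update
and `∑_j a j/(n · amax j) ≤ 1`, then the primal objective `X = ∑_j c j · x j`
has derivative `D` at `y₀` with
`D = (B/3)·(∑_j a j · x j y₀ + ∑_j a j/(n·amax j)) ≤ (B/3)·(2+1) = B`. -/
theorem stmt16 {ι : Type*} (J : Finset ι) (n : ℕ) (hn : 1 ≤ n)
    (B : ℝ) (hB : 0 < B)
    (c amax : ι → ℝ) (hc : ∀ j ∈ J, 0 < c j) (hamax : ∀ j ∈ J, 0 < amax j)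
    (a S : ι → ℝ) (ha : ∀ j ∈ J, 0 ≤ a j) (haa : ∀ j ∈ J, a j ≤ amax j)
    (x : ι → ℝ → ℝ)
    (hx : ∀ j ∈ J, ∀ y : ℝ, x j y =
      1 / (n * amax j) * (Real.exp (B / (3 * c j) * (S j + a j * y)) - 1))
    (y₀ : ℝ)
    (hstop : (∑ j ∈ J, a j * x j y₀) ≤ 2)
    (hratio : (∑ j ∈ J, a j / (n * amax j)) ≤ 1) :
    HasDerivAt (fun y => ∑ j ∈ J, c j * x j y)
      (B / 3 * ((∑ j ∈ J, a j * x j y₀) + ∑ j ∈ J, a j / (n * amax j))) y₀ ∧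
    B / 3 * ((∑ j ∈ J, a j * x j y₀) + ∑ j ∈ J, a j / (n * amax j)) ≤ B := by
  have hn0 : (0:ℝ) < (n:ℝ) := by exact_mod_cast hn
  constructor
  · have key : ∀ j ∈ J, HasDerivAt (fun y => c j * x j y)
        (B / 3 * (a j * x j y₀) + B / 3 * (a j / (n * amax j))) y₀ := by
      intro j hj
      have hcj := hc j hj
      have hmj := hamax j hj
      have hden : (n : ℝ) * amax j ≠ 0 := by positivity
      have h1 : HasDerivAt (fun y : ℝ => S j + a j * y) (a j) y₀ := by
        simpa using ((hasDerivAt_id y₀).const_mul (a j)).const_add (S j)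
      have h2 : HasDerivAt (fun y : ℝ => B / (3 * c j) * (S j + a j * y))
          (B / (3 * c j) * a j) y₀ := h1.const_mul _
      have h3 := h2.exp
      have h4 := ((h3.sub_const 1).const_mul (1 / (n * amax j))).const_mul (c j)
      have heq : (fun y => c j * x j y) =
          fun y => c j * (1 / (↑n * amax j) *
            (Real.exp (B / (3 * c j) * (S j + a j * y)) - 1)) := by
        funext y; rw [hx j hj y]
      rw [← heq] at h4
      refine h4.congr_deriv ?_
      have hxval := hx j hj y₀
      have hE : Real.exp (B / (3 * c j) * (S j + a j * y₀)) =
          (↑n * amax j) * x j y₀ + 1 := by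
        rw [hxval]; field_simp; ring
      rw [hE]
      field_simp
    have := HasDerivAt.fun_sum key
    refine this.congr_deriv ?_
    rw [Finset.sum_add_distrib, ← Finset.mul_sum, ← Finset.mul_sum]
    ring
  · have h3 : (∑ j ∈ J, a j * x j y₀) + ∑ j ∈ J, a j / (n * amax j) ≤ 3 := by
      linarith
    nlinarith
end

section
/- Competitive ratio with maximum distance d: Let OPT ≥ 1 and set T = d^{−4/3} n^{4/3}, t = d^{1/3} n^{2/3} with 1 ≤ d ≤ n. If k < T, then the greedy cost d·k satisfies d·k/OPT ≤ d√k ≤ d√T = d^{1/3} n^{2/3} (using OPT ≥ √k). If k ≥ T, then OPT ≥ √T = d^{−2/3} n^{2/3} and (t·OPT + n²/t)/OPT ≤ t + n²/(t·OPT) ≤ 2 d^{1/3} n^{2/3}. -/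
/-- Competitive ratio with maximum distance `d`: with `T = d^{−4/3} n^{4/3}`,
`t = d^{1/3} n^{2/3}`, `1 ≤ d ≤ n`, `OPT ≥ 1` and `OPT ≥ √k`:
if `k < T` then `d·k/OPT ≤ d·√k ≤ d^{1/3} n^{2/3}`; if `k ≥ T` then
`OPT ≥ d^{−2/3} n^{2/3}` and
`(t·OPT + n²/t)/OPT ≤ t + n²/(t·OPT) ≤ 2·d^{1/3} n^{2/3}`. -/
theorem stmt18 (n d k : ℕ) (hd : 1 ≤ d) (hdn : d ≤ n)
    (OPT : ℝ) (hOPT : 1 ≤ OPT) (hcount : Real.sqrt k ≤ OPT) :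
    (((k : ℝ) < (d : ℝ) ^ (-(4 : ℝ) / 3) * (n : ℝ) ^ ((4 : ℝ) / 3) →
      (d : ℝ) * k / OPT ≤ (d : ℝ) * Real.sqrt k ∧
      (d : ℝ) * Real.sqrt k ≤ (d : ℝ) ^ ((1 : ℝ) / 3) * (n : ℝ) ^ ((2 : ℝ) / 3))) ∧
    (((d : ℝ) ^ (-(4 : ℝ) / 3) * (n : ℝ) ^ ((4 : ℝ) / 3) ≤ (k : ℝ) →
      (d : ℝ) ^ (-(2 : ℝ) / 3) * (n : ℝ) ^ ((2 : ℝ) / 3) ≤ OPT ∧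
      ((d : ℝ) ^ ((1 : ℝ) / 3) * (n : ℝ) ^ ((2 : ℝ) / 3) * OPT +
          (n : ℝ) ^ 2 / ((d : ℝ) ^ ((1 : ℝ) / 3) * (n : ℝ) ^ ((2 : ℝ) / 3))) / OPT
        = (d : ℝ) ^ ((1 : ℝ) / 3) * (n : ℝ) ^ ((2 : ℝ) / 3) +
          (n : ℝ) ^ 2 / ((d : ℝ) ^ ((1 : ℝ) / 3) * (n : ℝ) ^ ((2 : ℝ) / 3) * OPT) ∧
      (d : ℝ) ^ ((1 : ℝ) / 3) * (n : ℝ) ^ ((2 : ℝ) / 3) +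
          (n : ℝ) ^ 2 / ((d : ℝ) ^ ((1 : ℝ) / 3) * (n : ℝ) ^ ((2 : ℝ) / 3) * OPT)
        ≤ 2 * ((d : ℝ) ^ ((1 : ℝ) / 3) * (n : ℝ) ^ ((2 : ℝ) / 3)))) := by
  have hd0 : (0:ℝ) < d := by positivity
  have hn0 : (0:ℝ) < n := by
    have : 1 ≤ n := le_trans hd hdn
    exact_mod_cast Nat.lt_of_lt_of_le Nat.zero_lt_one this
  have hO0 : (0:ℝ) < OPT := lt_of_lt_of_le one_pos hOPT
  -- sqrt T = d^{-2/3} n^{2/3}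
  have hsqrtT : Real.sqrt ((d : ℝ) ^ (-(4 : ℝ) / 3) * (n : ℝ) ^ ((4 : ℝ) / 3))
      = (d : ℝ) ^ (-(2 : ℝ) / 3) * (n : ℝ) ^ ((2 : ℝ) / 3) := by
    rw [Real.sqrt_eq_rpow, Real.mul_rpow (by positivity) (by positivity),
      ← Real.rpow_mul hd0.le, ← Real.rpow_mul hn0.le]
    norm_num
  have hdd : (d:ℝ) * ((d:ℝ) ^ (-(2:ℝ)/3) * (n:ℝ) ^ ((2:ℝ)/3))
      = (d:ℝ) ^ ((1:ℝ)/3) * (n:ℝ) ^ ((2:ℝ)/3) := by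
    have h : (d:ℝ) * (d:ℝ) ^ (-(2:ℝ)/3) = (d:ℝ) ^ ((1:ℝ)/3) := by
      nth_rewrite 1 [← Real.rpow_one (d:ℝ)]
      rw [← Real.rpow_add hd0]; norm_num
    rw [← mul_assoc, h]
  constructor
  · intro hk
    constructor
    · rw [div_le_iff₀ hO0, mul_assoc]
      have hk0 : (0:ℝ) ≤ (k:ℝ) := Nat.cast_nonneg k
      have hks : Real.sqrt k * Real.sqrt k = (k:ℝ) := Real.mul_self_sqrt hk0
      calc (d:ℝ) * (k:ℝ) = (d:ℝ) * (Real.sqrt k * Real.sqrt k) := by rw [hks]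
        _ ≤ (d:ℝ) * (Real.sqrt k * OPT) :=
          mul_le_mul_of_nonneg_left
            (mul_le_mul_of_nonneg_left hcount (Real.sqrt_nonneg _)) hd0.le
    · have h1 : Real.sqrt k ≤ (d:ℝ) ^ (-(2:ℝ)/3) * (n:ℝ) ^ ((2:ℝ)/3) := by
        rw [← hsqrtT]
        exact Real.sqrt_le_sqrt hk.le
      calc (d:ℝ) * Real.sqrt k ≤ (d:ℝ) * ((d:ℝ) ^ (-(2:ℝ)/3) * (n:ℝ) ^ ((2:ℝ)/3)) := by
            exact mul_le_mul_of_nonneg_left h1 hd0.le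
        _ = _ := hdd
  · intro hk
    have hT : (d : ℝ) ^ (-(2 : ℝ) / 3) * (n : ℝ) ^ ((2 : ℝ) / 3) ≤ OPT := by
      rw [← hsqrtT]
      exact le_trans (Real.sqrt_le_sqrt hk) hcount
    refine ⟨hT, ?_, ?_⟩
    · have ht0 : (0:ℝ) < (d:ℝ) ^ ((1:ℝ)/3) * (n:ℝ) ^ ((2:ℝ)/3) := by positivity
      field_simp
    · set t := (d:ℝ) ^ ((1:ℝ)/3) * (n:ℝ) ^ ((2:ℝ)/3) with ht
      have ht0 : (0:ℝ) < t := by positivity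
      have key : t * t * ((d:ℝ) ^ (-(2:ℝ)/3) * (n:ℝ) ^ ((2:ℝ)/3)) = (n:ℝ)^2 := by
        rw [ht]
        rw [show ((n:ℝ)^2 = (n:ℝ) ^ ((2:ℝ))) from by
          rw [← Real.rpow_natCast (n:ℝ) 2]; norm_num]
        rw [show (d:ℝ) ^ ((1:ℝ)/3) * (n:ℝ) ^ ((2:ℝ)/3) * ((d:ℝ) ^ ((1:ℝ)/3) * (n:ℝ) ^ ((2:ℝ)/3)) *
            ((d:ℝ) ^ (-(2:ℝ)/3) * (n:ℝ) ^ ((2:ℝ)/3))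
          = (d:ℝ) ^ ((1:ℝ)/3 + ((1:ℝ)/3 + -(2:ℝ)/3)) * (n:ℝ) ^ ((2:ℝ)/3 + ((2:ℝ)/3 + (2:ℝ)/3)) from by
          rw [Real.rpow_add hd0, Real.rpow_add hd0, Real.rpow_add hn0, Real.rpow_add hn0]; ring]
        norm_num
      have h2 : (n:ℝ)^2 / (t * OPT) ≤ t := by
        rw [div_le_iff₀ (by positivity)]
        calc (n:ℝ)^2 = t * t * ((d:ℝ) ^ (-(2:ℝ)/3) * (n:ℝ) ^ ((2:ℝ)/3)) := key.symm
          _ ≤ t * t * OPT := by nlinarith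
          _ = t * (t * OPT) := by ring
      linarith
end
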